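/- Let T, K ≥ 1 be integers, η > 0, and γ ∈ (0,1). Let z : {1,…,T} → {1,…,K} → ℝ satisfy |η·z_t(i)| ≤ 1 for all t and i. Define weights w_t(i) := exp(−η·Σ_{s=1}^{t−1} z_s(i)), W_t := Σ_{i=1}^K w_t(i), and probabilities π_t(i) := (1−γ)·w_t(i)/W_t + γ/K. Then for every fixed action j ∈ {1,…,K}: Σ_{t=1}^T Σ_{i=1}^K π_t(i)·z_t(i) − Σ_{t=1}^T z_t(j) ≤ (1−γ)·(log K)/η + η·Σ_{t=1}^T Σ_{i=1}^K π_t(i)·z_t(i)² + γ·Σ_{t=1}^T ((1/K)·Σ_{i=1}^K z_t(i) − z_t(j)). -/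

import Mathlib

open Finset

/-- Exponential weights: `wU T K η z t i = exp (-η ∑_{s < t} z s i)`. -/
noncomputable def wU (T K : ℕ) (η : ℝ) (z : Fin T → Fin K → ℝ) (t : Fin T) (i : Fin K) : ℝ :=
  Real.exp (-η * ∑ s ∈ univ.filter (fun s : Fin T => (s : ℕ) < (t : ℕ)), z s i)


noncomputable def znE (T K : ℕ) (z : Fin T → Fin K → ℝ) (s : ℕ) (i : Fin K) : ℝ :=
  if h : s < T then z ⟨s, h⟩ i else 0

noncomputable def WnE (T K : ℕ) (η : ℝ) (z : Fin T → Fin K → ℝ) (t : ℕ) : ℝ :=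
  ∑ i, Real.exp (-η * ∑ s ∈ Finset.range t, znE T K z s i)

lemma filtersum (T K : ℕ) (z : Fin T → Fin K → ℝ) (t : Fin T) (i : Fin K) :
    ∑ s ∈ univ.filter (fun s : Fin T => (s : ℕ) < (t : ℕ)), z s i
      = ∑ s ∈ Finset.range (t : ℕ), znE T K z s i := by
  have htT : (t : ℕ) < T := t.isLt
  rw [Finset.sum_filter]
  have h1 : ∀ s : Fin T, (if (s : ℕ) < (t : ℕ) then z s i else 0)
      = (fun n => if n < (t : ℕ) then znE T K z n i else 0) (s : ℕ) := by
    intro s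
    simp [znE, s.isLt]
  rw [Finset.sum_congr rfl (fun s _ => h1 s),
    Fin.sum_univ_eq_sum_range (fun n => if n < (t : ℕ) then znE T K z n i else 0) T,
    ← Finset.sum_filter]
  congr 1
  ext n
  simp only [Finset.mem_filter, Finset.mem_range]
  omega

lemma exp_quad (x : ℝ) (hx : |x| ≤ 1) : Real.exp x ≤ 1 + x + x^2 := by
  have h := Real.exp_bound hx (by norm_num : 0 < 3)
  simp [Finset.sum_range_succ, Nat.factorial] at h
  have h2 := abs_le.1 h
  have h3 : |x|^3 ≤ x^2 := by
    have : |x|^3 = |x| * x^2 := by rw [pow_succ, sq_abs]; ring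
    nlinarith [abs_nonneg x, sq_nonneg x]
  nlinarith [h2.2]

lemma perround (T K : ℕ) (hK : 1 ≤ K) (η : ℝ) (z : Fin T → Fin K → ℝ)
    (hz : ∀ t i, |η * z t i| ≤ 1) (t : ℕ) (ht : t < T) :
    Real.log (WnE T K η z (t+1)) - Real.log (WnE T K η z t)
      ≤ -η * ∑ i, (Real.exp (-η * ∑ s ∈ Finset.range t, znE T K z s i) / WnE T K η z t) * znE T K z t i
        + η^2 * ∑ i, (Real.exp (-η * ∑ s ∈ Finset.range t, znE T K z s i) / WnE T K η z t) * (znE T K z t i)^2 := by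
  have hne : (Finset.univ : Finset (Fin K)).Nonempty :=
    @Finset.univ_nonempty _ _ (Fin.pos_iff_nonempty.mp (by omega))
  set w : Fin K → ℝ := fun i => Real.exp (-η * ∑ s ∈ Finset.range t, znE T K z s i) with hw
  set a : Fin K → ℝ := fun i => znE T K z t i with ha
  set Wt : ℝ := WnE T K η z t with hWtdef
  have hWt : Wt = ∑ i, w i := rfl
  have hWtpos : 0 < Wt := by
    rw [hWt]; exact Finset.sum_pos (fun i _ => Real.exp_pos _) hne
  have hW1pos : 0 < WnE T K η z (t+1) :=
    Finset.sum_pos (fun i _ => Real.exp_pos _) hne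
  have hsucc : WnE T K η z (t+1) = ∑ i, w i * Real.exp (-η * a i) := by
    unfold WnE
    refine Finset.sum_congr rfl fun i _ => ?_
    rw [Finset.sum_range_succ, mul_add, Real.exp_add]
  have hzb : ∀ i, |(-η) * a i| ≤ 1 := by
    intro i
    have : a i = z ⟨t, ht⟩ i := by simp [ha, znE, ht]
    rw [this, neg_mul, abs_neg]
    exact hz _ _
  have hub : WnE T K η z (t+1) ≤ ∑ i, w i * (1 + (-η) * a i + ((-η) * a i)^2) := by
    rw [hsucc]
    refine Finset.sum_le_sum fun i _ => ?_
    exact mul_le_mul_of_nonneg_left (exp_quad _ (hzb i)) (Real.exp_pos _).le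
  set u : ℝ := -η * ∑ i, w i / Wt * a i + η^2 * ∑ i, w i / Wt * a i ^ 2 with hu
  have hsum : (1 : ℝ) + u = ∑ i, w i / Wt * (1 + (-η) * a i + ((-η) * a i)^2) := by
    have h1 : (1 : ℝ) = ∑ i, w i / Wt := by
      rw [← Finset.sum_div, ← hWt, div_self hWtpos.ne']
    rw [hu]
    nth_rewrite 1 [h1]
    rw [Finset.mul_sum, Finset.mul_sum, ← Finset.sum_add_distrib, ← Finset.sum_add_distrib]
    exact Finset.sum_congr rfl fun i _ => by ring
  have hr : 0 < WnE T K η z (t+1) / Wt := div_pos hW1pos hWtpos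
  have hratio : WnE T K η z (t+1) / Wt ≤ 1 + u := by
    rw [hsum]
    have : (∑ i, w i * (1 + (-η) * a i + ((-η) * a i)^2)) / Wt
        = ∑ i, w i / Wt * (1 + (-η) * a i + ((-η) * a i)^2) := by
      rw [Finset.sum_div]
      exact Finset.sum_congr rfl fun i _ => by ring
    rw [← this]
    gcongr
  have hlog : Real.log (WnE T K η z (t+1)) - Real.log Wt = Real.log (WnE T K η z (t+1) / Wt) :=
    (Real.log_div hW1pos.ne' hWtpos.ne').symm
  calc Real.log (WnE T K η z (t+1)) - Real.log Wt
      = Real.log (WnE T K η z (t+1) / Wt) := hlog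
    _ ≤ WnE T K η z (t+1) / Wt - 1 := Real.log_le_sub_one_of_pos hr
    _ ≤ u := by linarith


theorem stmt12 (T K : ℕ) (hT : 1 ≤ T) (hK : 1 ≤ K) (η γ : ℝ) (hη : 0 < η)
    (hγ0 : 0 < γ) (hγ1 : γ < 1)
    (z : Fin T → Fin K → ℝ) (hz : ∀ t i, |η * z t i| ≤ 1) (j : Fin K)
    (W : Fin T → ℝ) (hW : ∀ t, W t = ∑ i, wU T K η z t i)
    (π : Fin T → Fin K → ℝ)
    (hπ : ∀ t i, π t i = (1 - γ) * wU T K η z t i / W t + γ / K) :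
    (∑ t, ∑ i, π t i * z t i) - ∑ t, z t j
      ≤ (1 - γ) * Real.log K / η + η * ∑ t, ∑ i, π t i * z t i ^ 2
          + γ * ∑ t, ((1 / K) * ∑ i, z t i - z t j) := by
  have hne : (Finset.univ : Finset (Fin K)).Nonempty :=
    @Finset.univ_nonempty _ _ (Fin.pos_iff_nonempty.mp (by omega))
  set L : ℕ → ℝ := fun t => Real.log (WnE T K η z t) with hL
  -- telescoping
  have tele : ∑ t ∈ Finset.range T, (L (t+1) - L t) = L T - L 0 := Finset.sum_range_sub L T
  -- initial value
  have hL0 : L 0 = Real.log K := by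
    simp [hL, WnE]
  -- lower bound on L T
  have hsumj : ∑ s ∈ Finset.range T, znE T K z s j = ∑ t, z t j := by
    rw [← Fin.sum_univ_eq_sum_range (fun n => znE T K z n j) T]
    exact Finset.sum_congr rfl fun t _ => by simp [znE, t.isLt]
  have hLT : -η * ∑ t, z t j ≤ L T := by
    have h1 : Real.exp (-η * ∑ s ∈ Finset.range T, znE T K z s j) ≤ WnE T K η z T :=
      Finset.single_le_sum (f := fun i => Real.exp (-η * ∑ s ∈ Finset.range T, znE T K z s i))
        (fun i _ => (Real.exp_pos _).le) (Finset.mem_univ j)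
    have h2 := Real.log_le_log (Real.exp_pos _) h1
    rw [Real.log_exp, hsumj] at h2
    exact h2
  -- per round bound
  have upper : ∀ t ∈ Finset.range T, L (t+1) - L t
      ≤ -η * ∑ i, (Real.exp (-η * ∑ s ∈ Finset.range t, znE T K z s i) / WnE T K η z t) * znE T K z t i
        + η^2 * ∑ i, (Real.exp (-η * ∑ s ∈ Finset.range t, znE T K z s i) / WnE T K η z t) * (znE T K z t i)^2 := by
    intro t htmem
    exact perround T K hK η z hz t (Finset.mem_range.mp htmem)
  have main : -η * ∑ t, z t j - Real.log K
      ≤ ∑ t ∈ Finset.range T,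
          (-η * ∑ i, (Real.exp (-η * ∑ s ∈ Finset.range t, znE T K z s i) / WnE T K η z t) * znE T K z t i
            + η^2 * ∑ i, (Real.exp (-η * ∑ s ∈ Finset.range t, znE T K z s i) / WnE T K η z t) * (znE T K z t i)^2) := by
    have := Finset.sum_le_sum upper
    rw [tele] at this
    linarith [hLT, this]
  -- identify with wU / W
  have hwUeq : ∀ (t : Fin T) (i : Fin K),
      wU T K η z t i = Real.exp (-η * ∑ s ∈ Finset.range (t : ℕ), znE T K z s i) := by
    intro t i; rw [wU, filtersum]
  have hWeq : ∀ t : Fin T, W t = WnE T K η z (t : ℕ) := by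
    intro t; rw [hW]; exact Finset.sum_congr rfl fun i _ => by rw [hwUeq]
  have key : -η * ∑ t, z t j - Real.log K
      ≤ -η * ∑ t, ∑ i, wU T K η z t i / W t * z t i
        + η^2 * ∑ t, ∑ i, wU T K η z t i / W t * z t i ^ 2 := by
    refine main.trans_eq ?_
    rw [← Fin.sum_univ_eq_sum_range (fun t =>
      -η * ∑ i, (Real.exp (-η * ∑ s ∈ Finset.range t, znE T K z s i) / WnE T K η z t) * znE T K z t i
        + η^2 * ∑ i, (Real.exp (-η * ∑ s ∈ Finset.range t, znE T K z s i) / WnE T K η z t) * (znE T K z t i)^2) T]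
    rw [Finset.mul_sum, Finset.mul_sum, ← Finset.sum_add_distrib]
    refine Finset.sum_congr rfl fun t _ => ?_
    have hz' : ∀ i : Fin K, znE T K z (t : ℕ) i = z t i := fun i => by simp [znE, t.isLt]
    have e1 : ∑ i, (Real.exp (-η * ∑ s ∈ Finset.range (t : ℕ), znE T K z s i) / WnE T K η z (t : ℕ)) * znE T K z (t : ℕ) i
        = ∑ i, wU T K η z t i / W t * z t i :=
      Finset.sum_congr rfl fun i _ => by rw [hwUeq, hWeq, hz']
    have e2 : ∑ i, (Real.exp (-η * ∑ s ∈ Finset.range (t : ℕ), znE T K z s i) / WnE T K η z (t : ℕ)) * (znE T K z (t : ℕ) i)^2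
        = ∑ i, wU T K η z t i / W t * z t i ^ 2 :=
      Finset.sum_congr rfl fun i _ => by rw [hwUeq, hWeq, hz']
    rw [e1, e2]
  -- final algebra
  have key2 : (∑ t, ∑ i, wU T K η z t i / W t * z t i) - ∑ t, z t j
      ≤ Real.log K / η + η * ∑ t, ∑ i, wU T K η z t i / W t * z t i ^ 2 := by
    rw [← mul_le_mul_iff_right₀ hη]
    have hq : η * (Real.log K / η + η * ∑ t, ∑ i, wU T K η z t i / W t * z t i ^ 2)
        = Real.log K + η^2 * ∑ t, ∑ i, wU T K η z t i / W t * z t i ^ 2 := by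
      field_simp
    rw [hq]
    nlinarith [key]
  have e1 : ∑ t, ∑ i, π t i * z t i
      = (1 - γ) * (∑ t, ∑ i, wU T K η z t i / W t * z t i)
        + γ / K * ∑ t, ∑ i, z t i := by
    rw [Finset.mul_sum, Finset.mul_sum, ← Finset.sum_add_distrib]
    refine Finset.sum_congr rfl fun t _ => ?_
    rw [Finset.mul_sum, Finset.mul_sum, ← Finset.sum_add_distrib]
    refine Finset.sum_congr rfl fun i _ => ?_
    rw [hπ]; ring
  have e2 : (1 - γ) * (η * ∑ t, ∑ i, wU T K η z t i / W t * z t i ^ 2)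
      ≤ η * ∑ t, ∑ i, π t i * z t i ^ 2 := by
    have h0 : (0:ℝ) ≤ γ / K := div_nonneg hγ0.le (Nat.cast_nonneg K)
    have hs : (1 - γ) * ∑ t, ∑ i, wU T K η z t i / W t * z t i ^ 2
        ≤ ∑ t, ∑ i, π t i * z t i ^ 2 := by
      rw [Finset.mul_sum]
      refine Finset.sum_le_sum fun t _ => ?_
      rw [Finset.mul_sum]
      refine Finset.sum_le_sum fun i _ => ?_
      rw [hπ]
      have hd : ((1 - γ) * wU T K η z t i / W t + γ / (K:ℝ)) * z t i ^ 2
          - (1 - γ) * (wU T K η z t i / W t * z t i ^ 2) = γ / (K:ℝ) * z t i ^ 2 := by ring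
      linarith [mul_nonneg h0 (sq_nonneg (z t i)), hd]
    calc (1 - γ) * (η * ∑ t, ∑ i, wU T K η z t i / W t * z t i ^ 2)
        = η * ((1 - γ) * ∑ t, ∑ i, wU T K η z t i / W t * z t i ^ 2) := by ring
      _ ≤ η * ∑ t, ∑ i, π t i * z t i ^ 2 := mul_le_mul_of_nonneg_left hs hη.le
  have h4 := mul_le_mul_of_nonneg_left key2 (by linarith : (0:ℝ) ≤ 1 - γ)
  have e3 : ∑ t, ((1 / K : ℝ) * ∑ i, z t i - z t j)
      = (1 / K : ℝ) * (∑ t, ∑ i, z t i) - ∑ t, z t j := by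
    rw [Finset.sum_sub_distrib, Finset.mul_sum]
  rw [e1, e3]
  set S1 := ∑ t, ∑ i, wU T K η z t i / W t * z t i with hS1
  set S2 := ∑ t, ∑ i, wU T K η z t i / W t * z t i ^ 2 with hS2
  set Sz := ∑ t, ∑ i, z t i with hSz
  set Sj := ∑ t, z t j with hSj
  set Sp2 := ∑ t, ∑ i, π t i * z t i ^ 2 with hSp2
  ring_nf at h4 e2 ⊢
  linarith [h4, e2]
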